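/- Let D_1, D_2 ⊆ F_2^m be nonempty, D = D_1 + wD_2 ⊆ F_4^m (so |D| = |D_1|·|D_2|), and let x = α + wβ ∈ F_4^m with α, β ∈ F_2^m. Then 4·wt(c_D(x)) = 3·|D_1|·|D_2| − [χ_α(D_1)χ_β(D_2) + χ_β(D_1)χ_{α+β}(D_2) + χ_{α+β}(D_1)χ_α(D_2)]. -/

import Mathlib

open Finset

/-- The inner product of two binary vectors. -/
def dot2 {m : ℕ} (u v : Fin m → ZMod 2) : ZMod 2 := ∑ i, u i * v i

/-- The character sum `χ_u(P) = Σ_{v∈P} (−1)^{⟨u,v⟩}`. -/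
def chi {m : ℕ} (u : Fin m → ZMod 2) (P : Finset (Fin m → ZMod 2)) : ℤ :=
  ∑ v ∈ P, (if dot2 u v = 0 then 1 else -1)

variable {F : Type} [Field F] [Fintype F] [DecidableEq F]

/-- The embedding of `F_2 = {0,1}` into a field `F`. -/
def e2 (a : ZMod 2) : F := (a.val : F)

/-- The inner product `x·d = Σ x_i d_i` of two vectors over `F`. -/
def dotF {m : ℕ} (x d : Fin m → F) : F := ∑ i, x i * d i

/-- The quaternary vector `d_1 + w·d_2` attached to a pair of binary vectors. -/
def dvec {m : ℕ} (w : F) (p : (Fin m → ZMod 2) × (Fin m → ZMod 2)) : Fin m → F :=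
  fun i => e2 (p.1 i) + w * e2 (p.2 i)

/-- The Hamming weight of the codeword `c_D(x) = (x·d)_{d∈D}`. -/
def wtF {m : ℕ} (D : Finset (Fin m → F)) (x : Fin m → F) : ℕ :=
  (D.filter (fun d => dotF x d ≠ 0)).card

/-- Sign of an element of `ZMod 2`. -/
def sg (a : ZMod 2) : ℤ := if a = 0 then 1 else -1

lemma sg_add (a b : ZMod 2) : sg (a + b) = sg a * sg b := by
  fin_cases a <;> fin_cases b <;> decide

lemma chi_eq {m : ℕ} (u : Fin m → ZMod 2) (P : Finset (Fin m → ZMod 2)) :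
    chi u P = ∑ v ∈ P, sg (dot2 u v) := rfl

set_option linter.unusedSectionVars false

lemma z2_cases (a : ZMod 2) : a = 0 ∨ a = 1 := by revert a; decide

lemma e2_eq (a : ZMod 2) : (e2 a : F) = if a = 0 then 0 else 1 := by
  rcases z2_cases a with rfl | rfl <;> simp [e2, ZMod.val_one]

lemma e2_add (h2 : (2:F) = 0) (a b : ZMod 2) : (e2 (a+b) : F) = e2 a + e2 b := by
  rcases z2_cases a with rfl | rfl <;> rcases z2_cases b with rfl | rfl <;>
    simp [e2_eq, show ((1:ZMod 2)+1) = 0 from rfl] <;> linear_combination -h2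

lemma e2_mul (a b : ZMod 2) : (e2 (a*b) : F) = e2 a * e2 b := by
  rcases z2_cases a with rfl | rfl <;> rcases z2_cases b with rfl | rfl <;> simp [e2_eq]

lemma e2_sum (h2 : (2:F) = 0) {ι : Type*} (s : Finset ι) (f : ι → ZMod 2) :
    (e2 (∑ i ∈ s, f i) : F) = ∑ i ∈ s, (e2 (f i) : F) := by
  induction s using Finset.cons_induction with
  | empty => simp [e2_eq]
  | cons a s h ih => rw [Finset.sum_cons, Finset.sum_cons, e2_add h2, ih]

lemma indep (h2 : (2:F) = 0) {w : F} (hw : w ^ 2 + w + 1 = 0) (a b : ZMod 2) :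
    (e2 a : F) + w * e2 b = 0 ↔ a = 0 ∧ b = 0 := by
  have hne1 : (1:F) ≠ 0 := one_ne_zero
  have hw0 : w ≠ 0 := fun h => by simp [h] at hw
  have hw1 : (1:F) + w ≠ 0 := by
    intro h
    exact hne1 (by linear_combination hw - w * h)
  rcases z2_cases a with rfl | rfl <;> rcases z2_cases b with rfl | rfl <;> simp [e2_eq] <;>
    first
      | exact hw0
      | exact hne1
      | (intro hh; exact hw1 (by linear_combination hh))

lemma dot2_add_left {m : ℕ} (u v d : Fin m → ZMod 2) :
    dot2 (u + v) d = dot2 u d + dot2 v d := by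
  simp [dot2, add_mul, Finset.sum_add_distrib]

lemma dot_eq {m : ℕ} (h2 : (2:F) = 0) {w : F} (hw : w ^ 2 + w + 1 = 0)
    (α β : Fin m → ZMod 2) (p : (Fin m → ZMod 2) × (Fin m → ZMod 2)) :
    dotF (fun i => (e2 (α i) : F) + w * e2 (β i)) (dvec w p)
      = e2 (dot2 α p.1 + dot2 β p.2) + w * e2 (dot2 β p.1 + dot2 (α + β) p.2) := by
  have hw2 : w ^ 2 = 1 + w := by linear_combination hw - (1 + w) * h2
  simp only [dot2_add_left, e2_add h2]
  simp only [dot2, e2_sum h2, e2_mul, dotF, dvec]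
  simp only [mul_add, Finset.mul_sum, ← Finset.sum_add_distrib]
  apply Finset.sum_congr rfl
  intro i _
  linear_combination (e2 (β i) * e2 (p.2 i) : F) * hw2

/-- For nonempty `D_1, D_2 ⊆ F_2^m`, `D = D_1 + wD_2` (with `|D| = |D_1|·|D_2|`) and
`x = α + wβ`:  `4·wt(c_D(x)) = 3|D_1||D_2| −
[χ_α(D_1)χ_β(D_2) + χ_β(D_1)χ_{α+β}(D_2) + χ_{α+β}(D_1)χ_α(D_2)]`. -/
theorem weight_formula_quaternary {m : ℕ} (hm : 1 ≤ m)
    (hF : Fintype.card F = 4) (w : F) (hw : w ^ 2 + w + 1 = 0)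
    (D1 D2 : Finset (Fin m → ZMod 2)) (h1 : D1.Nonempty) (h2 : D2.Nonempty)
    (hbij : ∀ p ∈ D1 ×ˢ D2, ∀ q ∈ D1 ×ˢ D2, dvec w p = dvec w q → p = q)
    (α β : Fin m → ZMod 2) :
    4 * (wtF ((D1 ×ˢ D2).image (dvec w)) (fun i => e2 (α i) + w * e2 (β i)) : ℤ)
      = 3 * D1.card * D2.card -
        (chi α D1 * chi β D2 + chi β D1 * chi (α + β) D2 + chi (α + β) D1 * chi α D2) := by
  classical
  have hch : (2:F) = 0 := by
    have h4 : ((Fintype.card F : ℕ) : F) = 0 := FiniteField.cast_card_eq_zero F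
    rw [hF] at h4
    have h22 : (2:F) * 2 = 0 := by push_cast at h4; linear_combination h4
    rcases mul_eq_zero.mp h22 with h | h <;> exact h
  set x : Fin m → F := fun i => e2 (α i) + w * e2 (β i) with hx
  set S := D1 ×ˢ D2 with hS
  have hinj : Set.InjOn (dvec w) ↑S := fun p hp q hq h => hbij p hp q hq h
  have hwt : (wtF (S.image (dvec w)) x : ℤ)
      = ((S.filter (fun p => dotF x (dvec w p) ≠ 0)).card : ℤ) := by
    unfold wtF
    rw [Finset.filter_image]
    rw [Finset.card_image_of_injOn
      (hinj.mono (Finset.coe_subset.mpr (Finset.filter_subset _ _)))]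
  have hAB : ∀ p : (Fin m → ZMod 2) × (Fin m → ZMod 2),
      (dot2 α p.1 + dot2 β p.2) + (dot2 β p.1 + dot2 (α + β) p.2)
        = dot2 (α + β) p.1 + dot2 α p.2 := by
    intro p
    have h20 : (2 : ZMod 2) = 0 := rfl
    simp only [dot2_add_left]
    linear_combination (dot2 β p.2) * h20
  have key : ∀ p ∈ S, (if dotF x (dvec w p) ≠ 0 then (4:ℤ) else 0)
      = 3 - sg (dot2 α p.1 + dot2 β p.2) - sg (dot2 β p.1 + dot2 (α + β) p.2)
          - sg (dot2 (α + β) p.1 + dot2 α p.2) := by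
    intro p _
    have hd : dotF x (dvec w p) = 0
        ↔ (dot2 α p.1 + dot2 β p.2) = 0 ∧ (dot2 β p.1 + dot2 (α + β) p.2) = 0 := by
      rw [hx, dot_eq hch hw]
      exact indep hch hw _ _
    rw [← hAB]
    simp only [Ne, hd]
    generalize (dot2 α p.1 + dot2 β p.2) = a
    generalize (dot2 β p.1 + dot2 (α + β) p.2) = b
    fin_cases a <;> fin_cases b <;> decide
  have hsum : ∀ (u v : Fin m → ZMod 2),
      ∑ p ∈ S, sg (dot2 u p.1 + dot2 v p.2) = chi u D1 * chi v D2 := by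
    intro u v
    rw [chi_eq, chi_eq, Finset.sum_mul_sum, hS, Finset.sum_product]
    exact Finset.sum_congr rfl fun d1 _ => Finset.sum_congr rfl fun d2 _ => sg_add _ _
  calc 4 * (wtF (S.image (dvec w)) x : ℤ)
      = ∑ p ∈ S, (if dotF x (dvec w p) ≠ 0 then (4:ℤ) else 0) := by
        rw [hwt, Finset.card_filter, Nat.cast_sum, Finset.mul_sum]
        exact Finset.sum_congr rfl (fun p _ => by split <;> simp)
    _ = ∑ p ∈ S, (3 - sg (dot2 α p.1 + dot2 β p.2) - sg (dot2 β p.1 + dot2 (α + β) p.2)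
          - sg (dot2 (α + β) p.1 + dot2 α p.2)) := Finset.sum_congr rfl key
    _ = 3 * D1.card * D2.card -
        (chi α D1 * chi β D2 + chi β D1 * chi (α + β) D2 + chi (α + β) D1 * chi α D2) := by
        rw [Finset.sum_sub_distrib, Finset.sum_sub_distrib, Finset.sum_sub_distrib,
          Finset.sum_const, hsum, hsum, hsum, hS, Finset.card_product]
        push_cast
        ring
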